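/- Let O₁, O₂, O₃ be centers of three disks of radius R and P₁, P₂, P₃ points with dist(Pᵢ, Oᵢ) = R. Then |O₁O₂| + |O₂O₃| + |O₃O₁| ≤ |P₁P₂| + |P₂P₃| + |P₃P₁| + 3√3·R. -/

import Mathlib

/-- Core algebraic inequality. -/
theorem hhh_key (a b c d : ℝ)
    (ha : 0 ≤ a) (hb : 0 ≤ b) (hc : 0 ≤ c) (hd : 0 ≤ d)
    (h1 : a^2 + c^2 = 1) (h2 : b^2 + d^2 = 1) :
    a + b + a*d + b*c ≤ 3 * Real.sqrt 3 / 2 := by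
  have hc1 : c ≤ 1 := by nlinarith [sq_nonneg a]
  have hd1 : d ≤ 1 := by nlinarith [sq_nonneg b]
  have hq : (2 - c^2 - d^2) * ((1+c)^2 + (1+d)^2) ≤ 27/4 := by
    nlinarith [sq_nonneg (c-d), sq_nonneg (c+d-1), mul_nonneg (sub_nonneg.2 hc1) (sub_nonneg.2 hd1), sq_nonneg (c*d), sq_nonneg (c+d), mul_nonneg hc hd]
  have cauchy : (a + b + a*d + b*c)^2 ≤ (a^2+b^2) * ((1+d)^2 + (1+c)^2) := by
    nlinarith [sq_nonneg (a*(1+c) - b*(1+d))]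
  have hsq : (a + b + a*d + b*c)^2 ≤ 27/4 := by nlinarith
  have hs : (3 * Real.sqrt 3 / 2)^2 = 27/4 := by
    rw [div_pow, mul_pow, Real.sq_sqrt (by norm_num : (3:ℝ) ≥ 0)]; norm_num
  have h0 : 0 ≤ 3 * Real.sqrt 3 / 2 := by positivity
  nlinarith [hsq, hs, sq_nonneg (a + b + a*d + b*c - 3 * Real.sqrt 3 / 2)]

/-- Trig form: for all real x, y. -/
theorem hhh_trig (x y : ℝ) :
    |Real.sin x| + |Real.sin y| + |Real.sin (x + y)| ≤ 3 * Real.sqrt 3 / 2 := by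
  have hxy : |Real.sin (x + y)| ≤ |Real.sin x| * |Real.cos y| + |Real.sin y| * |Real.cos x| := by
    rw [Real.sin_add]
    calc |Real.sin x * Real.cos y + Real.cos x * Real.sin y|
        ≤ |Real.sin x * Real.cos y| + |Real.cos x * Real.sin y| := abs_add_le _ _
      _ = |Real.sin x| * |Real.cos y| + |Real.sin y| * |Real.cos x| := by
          rw [abs_mul, abs_mul]; ring
  have h1 : |Real.sin x|^2 + |Real.cos x|^2 = 1 := by
    rw [sq_abs, sq_abs]; exact Real.sin_sq_add_cos_sq x
  have h2 : |Real.sin y|^2 + |Real.cos y|^2 = 1 := by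
    rw [sq_abs, sq_abs]; exact Real.sin_sq_add_cos_sq y
  have := hhh_key |Real.sin x| |Real.sin y| |Real.cos x| |Real.cos y|
    (abs_nonneg _) (abs_nonneg _) (abs_nonneg _) (abs_nonneg _) h1 h2
  linarith

/-- Chord length formula. -/
theorem chord_eq (R θ φ : ℝ) (hR : 0 ≤ R) (v w : EuclideanSpace ℝ (Fin 2))
    (hv0 : v 0 = R * Real.cos θ) (hv1 : v 1 = R * Real.sin θ)
    (hw0 : w 0 = R * Real.cos φ) (hw1 : w 1 = R * Real.sin φ) :
    ‖v - w‖ = 2 * R * |Real.sin ((θ - φ)/2)| := by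
  have hn : ‖v - w‖ = Real.sqrt ((v 0 - w 0)^2 + (v 1 - w 1)^2) := by
    rw [EuclideanSpace.norm_eq, Fin.sum_univ_two]
    simp [sq_abs]
  have key : (v 0 - w 0)^2 + (v 1 - w 1)^2 = (2 * R * Real.sin ((θ - φ)/2))^2 := by
    rw [hv0, hv1, hw0, hw1]
    have hc : Real.cos (θ - φ) = Real.cos θ * Real.cos φ + Real.sin θ * Real.sin φ :=
      Real.cos_sub θ φ
    have h2 : Real.cos (θ - φ) = 1 - 2 * Real.sin ((θ - φ)/2)^2 := by
      have := Real.cos_two_mul ((θ - φ)/2)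
      have hs := Real.sin_sq_add_cos_sq ((θ - φ)/2)
      have : Real.cos (2 * ((θ - φ)/2)) = 2 * Real.cos ((θ - φ)/2)^2 - 1 := this
      rw [show 2 * ((θ - φ)/2) = θ - φ by ring] at this
      nlinarith
    have hs1 := Real.sin_sq_add_cos_sq θ
    have hs2 := Real.sin_sq_add_cos_sq φ
    linear_combination R^2*hs1 + R^2*hs2 + 2*R^2*hc - 2*R^2*h2
  rw [hn, key, Real.sqrt_sq_eq_abs, abs_mul, abs_mul]
  simp [abs_of_nonneg hR]

/-- Sum of pairwise distances of three points on a circle of radius R. -/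
theorem circle_three (R : ℝ) (hR : 0 < R) (v₁ v₂ v₃ : EuclideanSpace ℝ (Fin 2))
    (n1 : ‖v₁‖ = R) (n2 : ‖v₂‖ = R) (n3 : ‖v₃‖ = R) :
    ‖v₁ - v₂‖ + ‖v₂ - v₃‖ + ‖v₃ - v₁‖ ≤ 3 * Real.sqrt 3 * R := by
  -- get angles
  have getangle : ∀ v : EuclideanSpace ℝ (Fin 2), ‖v‖ = R →
      ∃ θ : ℝ, v 0 = R * Real.cos θ ∧ v 1 = R * Real.sin θ := by
    intro v hv
    have hsum : (v 0)^2 + (v 1)^2 = R^2 := by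
      have := hv
      rw [EuclideanSpace.norm_eq, Fin.sum_univ_two] at this
      have h' : Real.sqrt ((v 0)^2 + (v 1)^2) = R := by
        rw [← this]; congr 1 <;> simp [sq_abs]
      have := Real.sq_sqrt (by positivity : (0:ℝ) ≤ (v 0)^2 + (v 1)^2)
      rw [h'] at this; linarith
    set z : ℂ := ⟨v 0, v 1⟩ with hz
    have habs : ‖z‖ = R := by
      rw [Complex.norm_def, Complex.normSq_apply]
      simp only [hz]
      rw [show v 0 * v 0 + v 1 * v 1 = R^2 by nlinarith]
      exact Real.sqrt_sq hR.le
    have hz0 : z ≠ 0 := by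
      intro h; rw [h] at habs; simp at habs; linarith [habs, hR]
    refine ⟨z.arg, ?_, ?_⟩
    · have := Complex.cos_arg hz0
      rw [habs] at this
      have : Real.cos z.arg = v 0 / R := this
      field_simp at this; linarith [this]
    · have := Complex.sin_arg z
      rw [habs] at this
      have : Real.sin z.arg = v 1 / R := this
      field_simp at this; linarith [this]
  obtain ⟨θ₁, h10, h11⟩ := getangle v₁ n1
  obtain ⟨θ₂, h20, h21⟩ := getangle v₂ n2
  obtain ⟨θ₃, h30, h31⟩ := getangle v₃ n3
  have sub_apply : ∀ (v w : EuclideanSpace ℝ (Fin 2)) (i : Fin 2), (v - w) i = v i - w i :=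
    fun v w i => rfl
  have c12 : ‖v₁ - v₂‖ = 2 * R * |Real.sin ((θ₁ - θ₂)/2)| :=
    chord_eq R θ₁ θ₂ hR.le v₁ v₂ h10 h11 h20 h21
  have c23 : ‖v₂ - v₃‖ = 2 * R * |Real.sin ((θ₂ - θ₃)/2)| :=
    chord_eq R θ₂ θ₃ hR.le v₂ v₃ h20 h21 h30 h31
  have c31 : ‖v₃ - v₁‖ = 2 * R * |Real.sin ((θ₃ - θ₁)/2)| :=
    chord_eq R θ₃ θ₁ hR.le v₃ v₁ h30 h31 h10 h11
  rw [c12, c23, c31]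
  have htrig := hhh_trig ((θ₁ - θ₂)/2) ((θ₂ - θ₃)/2)
  have heq : (θ₁ - θ₂)/2 + (θ₂ - θ₃)/2 = (θ₁ - θ₃)/2 := by ring
  rw [heq] at htrig
  have hneg : |Real.sin ((θ₃ - θ₁)/2)| = |Real.sin ((θ₁ - θ₃)/2)| := by
    rw [show (θ₃ - θ₁)/2 = -((θ₁ - θ₃)/2) by ring, Real.sin_neg, abs_neg]
  rw [hneg]
  nlinarith [htrig, hR.le, Real.sqrt_nonneg 3]

theorem stmt_12 (R : ℝ) (hR : 0 < R)
    (O₁ O₂ O₃ P₁ P₂ P₃ : EuclideanSpace ℝ (Fin 2))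
    (h₁ : dist P₁ O₁ = R) (h₂ : dist P₂ O₂ = R) (h₃ : dist P₃ O₃ = R) :
    dist O₁ O₂ + dist O₂ O₃ + dist O₃ O₁ ≤
      dist P₁ P₂ + dist P₂ P₃ + dist P₃ P₁ + 3 * Real.sqrt 3 * R := by
  set v₁ := O₁ - P₁ with hv1
  set v₂ := O₂ - P₂ with hv2
  set v₃ := O₃ - P₃ with hv3
  have n1 : ‖v₁‖ = R := by rw [hv1, ← dist_eq_norm, dist_comm]; exact h₁
  have n2 : ‖v₂‖ = R := by rw [hv2, ← dist_eq_norm, dist_comm]; exact h₂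
  have n3 : ‖v₃‖ = R := by rw [hv3, ← dist_eq_norm, dist_comm]; exact h₃
  have key := circle_three R hR v₁ v₂ v₃ n1 n2 n3
  have t12 : dist O₁ O₂ ≤ dist P₁ P₂ + ‖v₁ - v₂‖ := by
    rw [dist_eq_norm, dist_eq_norm]
    calc ‖O₁ - O₂‖ = ‖(P₁ - P₂) + (v₁ - v₂)‖ := by rw [hv1, hv2]; congr 1; abel
      _ ≤ ‖P₁ - P₂‖ + ‖v₁ - v₂‖ := norm_add_le _ _
  have t23 : dist O₂ O₃ ≤ dist P₂ P₃ + ‖v₂ - v₃‖ := by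
    rw [dist_eq_norm, dist_eq_norm]
    calc ‖O₂ - O₃‖ = ‖(P₂ - P₃) + (v₂ - v₃)‖ := by rw [hv2, hv3]; congr 1; abel
      _ ≤ ‖P₂ - P₃‖ + ‖v₂ - v₃‖ := norm_add_le _ _
  have t31 : dist O₃ O₁ ≤ dist P₃ P₁ + ‖v₃ - v₁‖ := by
    rw [dist_eq_norm, dist_eq_norm]
    calc ‖O₃ - O₁‖ = ‖(P₃ - P₁) + (v₃ - v₁)‖ := by rw [hv3, hv1]; congr 1; abel
      _ ≤ ‖P₃ - P₁‖ + ‖v₃ - v₁‖ := norm_add_le _ _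
  linarith
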